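/- Let F_1, …, F_m be Borel probability distributions on ℝ_{≥0} with finite mean and let μ be their product distribution on ℝ_{≥0}^m. Then the optimal item-pricing revenue under μ is at least one half of the expected revenue of every dominant-strategy incentive compatible, individually rational deterministic single-item auction for m independent bidders with values v_j distributed according to F_j. -/

import Mathlib

open MeasureTheory

/-- A lottery over `m` items: allocation probabilities `q` with `q j ≥ 0`,
`∑ j, q j ≤ 1`, and a price `p ≥ 0`. -/
structure Lottery (m : ℕ) where
  q : Fin m → ℝ
  p : ℝ
  q_nonneg : ∀ j, 0 ≤ q j
  q_sum_le_one : ∑ j, q j ≤ 1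
  p_nonneg : 0 ≤ p

/-- The (expected) utility of lottery `ℓ` at valuation `v`. -/
def Lottery.util {m : ℕ} (ℓ : Lottery m) (v : Fin m → ℝ) : ℝ :=
  (∑ j, ℓ.q j * v j) - ℓ.p

/-- The probability vector of a possibly-absent lottery (`⊥` ↦ 0). -/
def selQ {m : ℕ} : Option (Lottery m) → Fin m → ℝ
  | some ℓ => ℓ.q
  | none => 0

/-- The price of a possibly-absent lottery (`⊥` ↦ 0). -/
def selP {m : ℕ} : Option (Lottery m) → ℝ
  | some ℓ => ℓ.p
  | none => 0

/-- `s` is a utility-maximizing selection for the lottery menu `L`. -/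
structure IsSelection {m : ℕ} (L : Set (Lottery m))
    (s : (Fin m → ℝ) → Option (Lottery m)) : Prop where
  measQ : ∀ j, Measurable fun v => selQ (s v) j
  measP : Measurable fun v => selP (s v)
  buy_opt : ∀ v : Fin m → ℝ, (∀ j, 0 ≤ v j) → ∀ ℓ : Lottery m, s v = some ℓ →
    ℓ ∈ L ∧ 0 ≤ ℓ.util v ∧ ∀ ℓ' ∈ L, ℓ'.util v ≤ ℓ.util v
  no_buy : ∀ v : Fin m → ℝ, (∀ j, 0 ≤ v j) → s v = none →
    ∀ ℓ ∈ L, ℓ.util v ≤ 0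

/-- Expected revenue of a selection under the valuation distribution `μ`. -/
noncomputable def lotteryRevenue {m : ℕ} (μ : Measure (Fin m → ℝ))
    (s : (Fin m → ℝ) → Option (Lottery m)) : ℝ :=
  ∫ v, selP (s v) ∂μ

/-- An item pricing: every lottery in the menu allocates some item
deterministically (its probability vector is a standard basis vector). -/
def IsItemPricing {m : ℕ} (L : Set (Lottery m)) : Prop :=
  ∀ ℓ ∈ L, ∃ j : Fin m, ℓ.q = fun j' => if j' = j then 1 else 0

/-- The optimal item-pricing revenue under `μ`. -/
noncomputable def optItemPricingRev {m : ℕ} (μ : Measure (Fin m → ℝ)) : ℝ :=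
  sSup {r : ℝ | ∃ (L : Set (Lottery m)) (s : (Fin m → ℝ) → Option (Lottery m)),
    L.Nonempty ∧ IsItemPricing L ∧ IsSelection L s ∧ r = lotteryRevenue μ s}

/-- The optimal lottery revenue under `μ`. -/
noncomputable def optLotteryRev {m : ℕ} (μ : Measure (Fin m → ℝ)) : ℝ :=
  sSup {r : ℝ | ∃ (L : Set (Lottery m)) (s : (Fin m → ℝ) → Option (Lottery m)),
    L.Nonempty ∧ IsSelection L s ∧ r = lotteryRevenue μ s}

/-- A dominant-strategy incentive compatible, individually rational
deterministic single-item auction for `m` bidders: `x v = some j` means bidder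
`j` wins, `x v = none` means no winner; `pay v j ≥ 0` is bidder `j`'s payment. -/
structure IsAuction {m : ℕ} (x : (Fin m → ℝ) → Option (Fin m))
    (pay : (Fin m → ℝ) → Fin m → ℝ) : Prop where
  measX : ∀ j : Fin m, MeasurableSet {v | x v = some j}
  measPay : ∀ j : Fin m, Measurable fun v => pay v j
  pay_nonneg : ∀ v j, 0 ≤ pay v j
  ic : ∀ v : Fin m → ℝ, (∀ j, 0 ≤ v j) → ∀ (j : Fin m) (v' : ℝ), 0 ≤ v' →
    (if x (Function.update v j v') = some j then v j else 0)
        - pay (Function.update v j v') j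
      ≤ (if x v = some j then v j else 0) - pay v j
  ir : ∀ v : Fin m → ℝ, (∀ j, 0 ≤ v j) → ∀ j : Fin m,
    0 ≤ (if x v = some j then v j else 0) - pay v j

/-- Expected revenue of a single-item auction under `μ`. -/
noncomputable def auctionRevenue {m : ℕ} (μ : Measure (Fin m → ℝ))
    (pay : (Fin m → ℝ) → Fin m → ℝ) : ℝ :=
  ∫ v, ∑ j, pay v j ∂μ

open Set Function
open scoped ENNReal NNReal

namespace CHK5


noncomputable def sj (Fj : Measure ℝ) (t : ℝ) : ℝ :=
  sSup ((fun p => (p - t) * (Fj (Set.Ici p)).toReal) '' Set.Ici t)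

lemma lint_ofReal_lt_top (Fj : Measure ℝ) (h : Integrable id Fj) :
    (∫⁻ x, ENNReal.ofReal x ∂Fj) < ⊤ := by
  refine lt_of_le_of_lt (lintegral_mono fun x => ?_) h.2
  calc ENNReal.ofReal x ≤ ENNReal.ofReal ‖x‖ :=
        ENNReal.ofReal_le_ofReal (le_abs_self x)
    _ = (‖(id x : ℝ)‖₊ : ℝ≥0∞) := ofReal_norm x

lemma price_rev_le (Fj : Measure ℝ) (h : Integrable id Fj) {p : ℝ} (hp : 0 ≤ p) :
    ENNReal.ofReal p * Fj (Set.Ici p) ≤ ∫⁻ x, ENNReal.ofReal x ∂Fj := by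
  refine le_trans ?_ (mul_meas_ge_le_lintegral₀ (by fun_prop) (ENNReal.ofReal p))
  exact mul_le_mul_right (measure_mono fun x hx => ENNReal.ofReal_le_ofReal hx) _

lemma bddAbove_sj (Fj : Measure ℝ) [IsProbabilityMeasure Fj] (h : Integrable id Fj)
    {t : ℝ} (ht : 0 ≤ t) :
    BddAbove ((fun p => (p - t) * (Fj (Set.Ici p)).toReal) '' Set.Ici t) := by
  refine ⟨(∫⁻ x, ENNReal.ofReal x ∂Fj).toReal, ?_⟩
  rintro y ⟨p, hp, rfl⟩
  have hp0 : 0 ≤ p := le_trans ht hp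
  have h1 : (p - t) * (Fj (Set.Ici p)).toReal ≤ p * (Fj (Set.Ici p)).toReal := by
    have := ENNReal.toReal_nonneg (a := Fj (Set.Ici p))
    nlinarith
  refine h1.trans ?_
  have h2 := price_rev_le Fj h hp0
  have h3 : (ENNReal.ofReal p * Fj (Set.Ici p)).toReal ≤
      (∫⁻ x, ENNReal.ofReal x ∂Fj).toReal :=
    ENNReal.toReal_mono (lint_ofReal_lt_top Fj h).ne h2
  rw [ENNReal.toReal_mul, ENNReal.toReal_ofReal hp0] at h3
  exact h3

lemma sj_nonneg (Fj : Measure ℝ) [IsProbabilityMeasure Fj] (h : Integrable id Fj)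
    {t : ℝ} (ht : 0 ≤ t) : 0 ≤ sj Fj t := by
  have : (0:ℝ) ∈ (fun p => (p - t) * (Fj (Set.Ici p)).toReal) '' Set.Ici t :=
    ⟨t, le_refl t, by simp⟩
  exact le_csSup (bddAbove_sj Fj h ht) this

lemma le_sj (Fj : Measure ℝ) [IsProbabilityMeasure Fj] (h : Integrable id Fj)
    {t c : ℝ} (ht : 0 ≤ t) (hc : t ≤ c) :
    (c - t) * (Fj (Set.Ici c)).toReal ≤ sj Fj t :=
  le_csSup (bddAbove_sj Fj h ht) ⟨c, hc, rfl⟩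

section Auction

variable {m : ℕ} (F : Fin m → Measure ℝ) [∀ j, IsProbabilityMeasure (F j)]
  (x : (Fin m → ℝ) → Option (Fin m)) (pay : (Fin m → ℝ) → Fin m → ℝ)

/-- The nonnegative orthant. -/
def Orth (m : ℕ) : Set (Fin m → ℝ) := {v | ∀ i, 0 ≤ v i}

lemma measurable_Orth (m : ℕ) : MeasurableSet (Orth m) := by
  have : Orth m = ⋂ i, (fun v : Fin m → ℝ => v i) ⁻¹' Set.Ici 0 := by
    ext v; simp [Orth, Set.mem_iInter]
  rw [this]
  exact MeasurableSet.iInter fun i => (measurable_pi_apply i) measurableSet_Ici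

lemma oneD (hauction : IsAuction x pay) (j : Fin m) {t : ℝ} (ht : 0 ≤ t)
    (hFj : Integrable id (F j)) (v₀ : Fin m → ℝ) :
    ∫⁻ w, (Orth m).indicator (fun v => ENNReal.ofReal (pay v j)) (Function.update v₀ j w) ∂(F j)
      ≤ ∫⁻ w, (ENNReal.ofReal t * ((Orth m) ∩ {v | x v = some j}).indicator 1
          (Function.update v₀ j w) + ENNReal.ofReal (sj (F j) t)) ∂(F j) := by
  classical
  by_cases hw : ∃ w₀, (∀ i, 0 ≤ Function.update v₀ j w₀ i) ∧ x (Function.update v₀ j w₀) = some j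
  · obtain ⟨w₀, hnn₀, hx₀⟩ := hw
    have hw₀0 : 0 ≤ w₀ := by simpa using hnn₀ j
    set c := pay (Function.update v₀ j w₀) j with hc_def
    have hc0 : 0 ≤ c := hauction.pay_nonneg _ j
    -- all winners pay c
    have key : ∀ w, (∀ i, 0 ≤ Function.update v₀ j w i) →
        x (Function.update v₀ j w) = some j → pay (Function.update v₀ j w) j = c := by
      intro w hnn hxw
      have hw0 : 0 ≤ w := by simpa using hnn j
      have h1 := hauction.ic (Function.update v₀ j w) hnn j w₀ hw₀0
      rw [Function.update_idem] at h1
      simp only [hx₀, hxw, if_true, eq_self_iff_true, Function.update_self] at h1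
      have h2 := hauction.ic (Function.update v₀ j w₀) hnn₀ j w hw0
      rw [Function.update_idem] at h2
      simp only [hx₀, hxw, if_true, eq_self_iff_true, Function.update_self] at h2
      linarith
    -- pointwise bound
    have hpt : ∀ w, (Orth m).indicator (fun v => ENNReal.ofReal (pay v j))
        (Function.update v₀ j w)
        ≤ ENNReal.ofReal t * ((Orth m) ∩ {v | x v = some j}).indicator 1
            (Function.update v₀ j w)
          + ENNReal.ofReal (c - t) * (Set.Ici c).indicator 1 w := by
      intro w
      by_cases hQ : Function.update v₀ j w ∈ Orth m
      · rw [Set.indicator_of_mem hQ]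
        by_cases hxw : x (Function.update v₀ j w) = some j
        · have hpay : pay (Function.update v₀ j w) j = c := key w hQ hxw
          have hwc : c ≤ w := by
            have := hauction.ir (Function.update v₀ j w) hQ j
            simp only [hxw, if_true, eq_self_iff_true, Function.update_self, hpay] at this
            linarith
          have h1 : ((Orth m) ∩ {v | x v = some j}).indicator
              (1 : (Fin m → ℝ) → ℝ≥0∞) (Function.update v₀ j w) = 1 :=
            Set.indicator_of_mem (Set.mem_inter hQ hxw) _
          have h2 : (Set.Ici c).indicator (1 : ℝ → ℝ≥0∞) w = 1 :=
            Set.indicator_of_mem hwc _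
          rw [hpay, h1, h2, mul_one, mul_one]
          calc ENNReal.ofReal c = ENNReal.ofReal (t + (c - t)) := by ring_nf
            _ ≤ ENNReal.ofReal t + ENNReal.ofReal (c - t) := ENNReal.ofReal_add_le
        · have hpay : pay (Function.update v₀ j w) j = 0 := by
            have := hauction.ir (Function.update v₀ j w) hQ j
            have h0 := hauction.pay_nonneg (Function.update v₀ j w) j
            simp only [hxw, if_false] at this
            linarith
          simp [hpay]
      · rw [Set.indicator_of_notMem hQ]
        exact zero_le
    have hS : MeasurableSet ((Orth m) ∩ {v | x v = some j}) :=
      (measurable_Orth m).inter (hauction.measX j)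
    calc ∫⁻ w, (Orth m).indicator (fun v => ENNReal.ofReal (pay v j))
          (Function.update v₀ j w) ∂(F j)
        ≤ ∫⁻ w, (ENNReal.ofReal t * ((Orth m) ∩ {v | x v = some j}).indicator 1
            (Function.update v₀ j w)
            + ENNReal.ofReal (c - t) * (Set.Ici c).indicator 1 w) ∂(F j) :=
          lintegral_mono hpt
      _ = ENNReal.ofReal t * (∫⁻ w, ((Orth m) ∩ {v | x v = some j}).indicator 1
            (Function.update v₀ j w) ∂(F j))
            + ENNReal.ofReal (c - t) * (F j) (Set.Ici c) := by
          rw [lintegral_add_left, lintegral_const_mul, lintegral_const_mul, lintegral_indicator]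
          · simp
          · exact measurableSet_Ici
          · exact (measurable_one.indicator measurableSet_Ici)
          · exact ((measurable_one.indicator hS).comp (measurable_update v₀))
          · exact (ENNReal.continuous_const_mul (by simp)).measurable.comp
              ((measurable_one.indicator hS).comp (measurable_update v₀))
      _ ≤ ENNReal.ofReal t * (∫⁻ w, ((Orth m) ∩ {v | x v = some j}).indicator 1
            (Function.update v₀ j w) ∂(F j)) + ENNReal.ofReal (sj (F j) t) := by
          gcongr
          by_cases hct : t ≤ c
          · have hmem := le_sj (F j) hFj ht hct
            calc ENNReal.ofReal (c - t) * (F j) (Set.Ici c)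
                = ENNReal.ofReal ((c - t) * ((F j) (Set.Ici c)).toReal) := by
                  rw [ENNReal.ofReal_mul (by linarith)]
                  congr 1
                  exact (ENNReal.ofReal_toReal (measure_ne_top _ _)).symm
              _ ≤ ENNReal.ofReal (sj (F j) t) := ENNReal.ofReal_le_ofReal hmem
          · have : ENNReal.ofReal (c - t) = 0 := by
              rw [ENNReal.ofReal_eq_zero]; linarith
            simp [this]
      _ = ∫⁻ w, (ENNReal.ofReal t * ((Orth m) ∩ {v | x v = some j}).indicator 1
            (Function.update v₀ j w) + ENNReal.ofReal (sj (F j) t)) ∂(F j) := by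
          have hmeas : Measurable fun w : ℝ =>
              (((Orth m) ∩ {v | x v = some j}).indicator 1 (Function.update v₀ j w) : ℝ≥0∞) :=
            (measurable_one.indicator hS).comp (measurable_update v₀)
          rw [lintegral_add_right _ measurable_const, lintegral_const, measure_univ, mul_one,
            lintegral_const_mul _ hmeas]
  · -- no winner: integrand is zero
    have hzero : ∀ w, (Orth m).indicator (fun v => ENNReal.ofReal (pay v j))
        (Function.update v₀ j w) = 0 := by
      intro w
      by_cases hQ : Function.update v₀ j w ∈ Orth m
      · rw [Set.indicator_of_mem hQ]
        by_cases hxw : x (Function.update v₀ j w) = some j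
        · exact absurd ⟨w, hQ, hxw⟩ hw
        · have := hauction.ir (Function.update v₀ j w) hQ j
          have h0 := hauction.pay_nonneg (Function.update v₀ j w) j
          simp only [hxw, if_false] at this
          simp [ENNReal.ofReal_eq_zero]; linarith
      · rw [Set.indicator_of_notMem hQ]
    simp only [hzero]
    simp


lemma orth_compl_null (hF_nonneg : ∀ j, F j (Set.Iio 0) = 0) :
    Measure.pi F (Orth m)ᶜ = 0 := by
  have : (Orth m)ᶜ = ⋃ i, (fun v : Fin m → ℝ => v i) ⁻¹' Set.Iio 0 := by
    ext v
    simp only [Set.mem_compl_iff, Orth, Set.mem_setOf_eq, not_forall, not_le,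
      Set.mem_iUnion, Set.mem_preimage, Set.mem_Iio]
  rw [this]
  refine measure_iUnion_null fun i => ?_
  exact Measure.pi_eval_preimage_null F (hF_nonneg i)

lemma auction_bound (hauction : IsAuction x pay)
    (hF_nonneg : ∀ j, F j (Set.Iio 0) = 0) (hF_mean : ∀ j, Integrable id (F j))
    {t : ℝ} (ht : 0 ≤ t) :
    auctionRevenue (Measure.pi F) pay ≤ t + ∑ j, sj (F j) t := by
  classical
  set μ := Measure.pi F with hμ
  have hpaym : Measurable fun v => ∑ j, pay v j :=
    Finset.measurable_sum _ fun j _ => hauction.measPay j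
  have hnonneg : 0 ≤ᵐ[μ] fun v => ∑ j, pay v j :=
    Filter.Eventually.of_forall fun v =>
      Finset.sum_nonneg fun j _ => hauction.pay_nonneg v j
  have hR : auctionRevenue μ pay
      = (∫⁻ v, ENNReal.ofReal (∑ j, pay v j) ∂μ).toReal := by
    rw [auctionRevenue, integral_eq_lintegral_of_nonneg_ae hnonneg hpaym.aestronglyMeasurable]
  -- split the sum
  have hsplit : (∫⁻ v, ENNReal.ofReal (∑ j, pay v j) ∂μ)
      = ∑ j, ∫⁻ v, ENNReal.ofReal (pay v j) ∂μ := by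
    have h1 : ∀ v, ENNReal.ofReal (∑ j, pay v j) = ∑ j, ENNReal.ofReal (pay v j) := fun v =>
      ENNReal.ofReal_sum_of_nonneg fun j _ => hauction.pay_nonneg v j
    simp_rw [h1]
    exact lintegral_finset_sum _ fun j _ => (hauction.measPay j).ennreal_ofReal
  -- per-coordinate bound
  have hone : ∀ j : Fin m, (∫⁻ v, ENNReal.ofReal (pay v j) ∂μ)
      ≤ ENNReal.ofReal t * μ ((Orth m) ∩ {v | x v = some j}) + ENNReal.ofReal (sj (F j) t) := by
    intro j
    have hS : MeasurableSet ((Orth m) ∩ {v | x v = some j}) :=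
      (measurable_Orth m).inter (hauction.measX j)
    have hf : Measurable ((Orth m).indicator (fun v => ENNReal.ofReal (pay v j))) :=
      ((hauction.measPay j).ennreal_ofReal).indicator (measurable_Orth m)
    have hg : Measurable (fun v => ENNReal.ofReal t *
        ((Orth m) ∩ {v | x v = some j}).indicator 1 v + ENNReal.ofReal (sj (F j) t)) :=
      ((measurable_const.mul (measurable_one.indicator hS)).add measurable_const)
    have step1 : (∫⁻ v, ENNReal.ofReal (pay v j) ∂μ)
        = ∫⁻ v, (Orth m).indicator (fun v => ENNReal.ofReal (pay v j)) v ∂μ := by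
      refine lintegral_congr_ae ?_
      filter_upwards [MeasureTheory.measure_eq_zero_iff_ae_notMem.mp (orth_compl_null F hF_nonneg)]
        with v hv
      rw [Set.indicator_of_mem (Set.not_notMem.mp hv)]
    have step2 : (∫⁻ v, (Orth m).indicator (fun v => ENNReal.ofReal (pay v j)) v ∂μ)
        ≤ ∫⁻ v, (ENNReal.ofReal t * ((Orth m) ∩ {v | x v = some j}).indicator 1 v
            + ENNReal.ofReal (sj (F j) t)) ∂μ := by
      refine lintegral_le_of_lmarginal_le {j} hf hg ?_
      intro v₀
      rw [lmarginal_singleton, lmarginal_singleton]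
      exact oneD F x pay hauction j ht (hF_mean j) v₀
    have step3 : (∫⁻ v, (ENNReal.ofReal t * ((Orth m) ∩ {v | x v = some j}).indicator 1 v
        + ENNReal.ofReal (sj (F j) t)) ∂μ)
        = ENNReal.ofReal t * μ ((Orth m) ∩ {v | x v = some j})
          + ENNReal.ofReal (sj (F j) t) := by
      rw [lintegral_add_right _ measurable_const, lintegral_const, measure_univ, mul_one,
        lintegral_const_mul _ (measurable_one.indicator hS), lintegral_indicator hS]
      simp
    rw [step1]
    exact step2.trans (le_of_eq step3)
  -- sum of winning probabilities is at most one
  have hsum1 : (∑ j, μ ((Orth m) ∩ {v | x v = some j})) ≤ 1 := by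
    rw [← measure_biUnion_finset ?hd fun j _ => (measurable_Orth m).inter (hauction.measX j)]
    · exact le_trans (measure_mono (Set.subset_univ _)) (by simp)
    case hd =>
      intro i _ j _ hij
      refine Set.disjoint_left.mpr ?_
      rintro v ⟨-, hvi⟩ ⟨-, hvj⟩
      exact hij (Option.some_injective _ (hvi.symm.trans hvj))
  have htot : (∫⁻ v, ENNReal.ofReal (∑ j, pay v j) ∂μ)
      ≤ ENNReal.ofReal (t + ∑ j, sj (F j) t) := by
    rw [hsplit]
    calc (∑ j, ∫⁻ v, ENNReal.ofReal (pay v j) ∂μ)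
        ≤ ∑ j, (ENNReal.ofReal t * μ ((Orth m) ∩ {v | x v = some j})
            + ENNReal.ofReal (sj (F j) t)) := Finset.sum_le_sum fun j _ => hone j
      _ = ENNReal.ofReal t * (∑ j, μ ((Orth m) ∩ {v | x v = some j}))
            + ∑ j, ENNReal.ofReal (sj (F j) t) := by
          rw [Finset.sum_add_distrib, Finset.mul_sum]
      _ ≤ ENNReal.ofReal t * 1 + ∑ j, ENNReal.ofReal (sj (F j) t) := by
          gcongr
      _ = ENNReal.ofReal t + ∑ j, ENNReal.ofReal (sj (F j) t) := by rw [mul_one]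
      _ = ENNReal.ofReal (t + ∑ j, sj (F j) t) := by
          rw [ENNReal.ofReal_add ht (Finset.sum_nonneg fun j _ => sj_nonneg (F j) (hF_mean j) ht),
            ENNReal.ofReal_sum_of_nonneg fun j _ => sj_nonneg (F j) (hF_mean j) ht]
  rw [hR]
  calc (∫⁻ v, ENNReal.ofReal (∑ j, pay v j) ∂μ).toReal
      ≤ (ENNReal.ofReal (t + ∑ j, sj (F j) t)).toReal :=
        ENNReal.toReal_mono ENNReal.ofReal_ne_top htot
    _ = t + ∑ j, sj (F j) t := ENNReal.toReal_ofReal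
        (add_nonneg ht (Finset.sum_nonneg fun j _ => sj_nonneg (F j) (hF_mean j) ht))

end Auction

section Pricing

variable {m : ℕ}

noncomputable def itemLottery (m : ℕ) (j : Fin m) (pr : ℝ) (hpr : 0 ≤ pr) : Lottery m where
  q := fun j' => if j' = j then 1 else 0
  p := pr
  q_nonneg := fun j' => by by_cases h : j' = j <;> simp [h]
  q_sum_le_one := by
    classical
    rw [Finset.sum_ite_eq' Finset.univ j (fun _ => (1:ℝ))]
    simp
  p_nonneg := hpr

lemma itemLottery_util (j : Fin m) (pr : ℝ) (hpr : 0 ≤ pr) (v : Fin m → ℝ) :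
    (itemLottery m j pr hpr).util v = v j - pr := by
  classical
  have : ∀ j' : Fin m, (if j' = j then (1:ℝ) else 0) * v j' = if j' = j then v j' else 0 :=
    fun j' => by by_cases h : j' = j <;> simp [h]
  simp only [Lottery.util, itemLottery, this]
  rw [Finset.sum_ite_eq' Finset.univ j (fun j' => v j')]
  simp

open Classical in
/-- The smallest utility-maximizing index. -/
noncomputable def bestIdx (p : Fin m → ℝ) (hm : 0 < m) (v : Fin m → ℝ) : Fin m :=
  (Finset.univ.filter (fun i => ∀ k, v k - p k ≤ v i - p i)).min' (by
    obtain ⟨b, -, hb⟩ := Finset.exists_max_image Finset.univ (fun i => v i - p i)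
      ⟨⟨0, hm⟩, Finset.mem_univ _⟩
    exact ⟨b, Finset.mem_filter.mpr ⟨Finset.mem_univ _, fun k => hb k (Finset.mem_univ _)⟩⟩)

open Classical in
lemma bestIdx_eq_iff (p : Fin m → ℝ) (hm : 0 < m) (v : Fin m → ℝ) (j : Fin m) :
    bestIdx p hm v = j ↔ (∀ k, v k - p k ≤ v j - p j) ∧
      ∀ i : Fin m, (∀ k, v k - p k ≤ v i - p i) → j ≤ i := by
  have hne : (Finset.univ.filter (fun i => ∀ k, v k - p k ≤ v i - p i)).Nonempty := by
    obtain ⟨b, -, hb⟩ := Finset.exists_max_image Finset.univ (fun i => v i - p i)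
      ⟨⟨0, hm⟩, Finset.mem_univ _⟩
    exact ⟨b, Finset.mem_filter.mpr ⟨Finset.mem_univ _, fun k => hb k (Finset.mem_univ _)⟩⟩
  constructor
  · rintro rfl
    have h1 := Finset.min'_mem (Finset.univ.filter
        (fun i => ∀ k, v k - p k ≤ v i - p i)) hne
    rw [Finset.mem_filter] at h1
    refine ⟨h1.2, fun i hi => ?_⟩
    exact Finset.min'_le _ i (Finset.mem_filter.mpr ⟨Finset.mem_univ _, hi⟩)
  · rintro ⟨h1, h2⟩
    refine le_antisymm ?_ ?_
    · exact Finset.min'_le _ j (Finset.mem_filter.mpr ⟨Finset.mem_univ _, h1⟩)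
    · refine Finset.le_min' _ _ _ fun i hi => ?_
      exact h2 i (Finset.mem_filter.mp hi).2

lemma bestIdx_opt (p : Fin m → ℝ) (hm : 0 < m) (v : Fin m → ℝ) (k : Fin m) :
    v k - p k ≤ v (bestIdx p hm v) - p (bestIdx p hm v) :=
  ((bestIdx_eq_iff p hm v _).mp rfl).1 k

lemma measurable_bestIdx_eq (p : Fin m → ℝ) (hm : 0 < m) (j : Fin m) :
    MeasurableSet {v : Fin m → ℝ | bestIdx p hm v = j} := by
  have hM : ∀ i : Fin m, MeasurableSet {v : Fin m → ℝ | ∀ k, v k - p k ≤ v i - p i} := by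
    intro i
    have : {v : Fin m → ℝ | ∀ k, v k - p k ≤ v i - p i}
        = ⋂ k, {v : Fin m → ℝ | v k - p k ≤ v i - p i} := by
      ext v; simp
    rw [this]
    exact MeasurableSet.iInter fun k =>
      measurableSet_le ((measurable_pi_apply k).sub measurable_const)
        ((measurable_pi_apply i).sub measurable_const)
  have hset : {v : Fin m → ℝ | bestIdx p hm v = j}
      = {v : Fin m → ℝ | ∀ k, v k - p k ≤ v j - p j} ∩
        ⋂ i : Fin m, {v : Fin m → ℝ | (∀ k, v k - p k ≤ v i - p i) → j ≤ i} := by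
    ext v
    simp only [Set.mem_setOf_eq, Set.mem_inter_iff, Set.mem_iInter, bestIdx_eq_iff p hm v j]
  rw [hset]
  refine (hM j).inter (MeasurableSet.iInter fun i => ?_)
  by_cases hji : j ≤ i
  · have : {v : Fin m → ℝ | (∀ k, v k - p k ≤ v i - p i) → j ≤ i} = Set.univ := by
      ext v; simp [hji]
    rw [this]; exact MeasurableSet.univ
  · have : {v : Fin m → ℝ | (∀ k, v k - p k ≤ v i - p i) → j ≤ i}
        = {v : Fin m → ℝ | ∀ k, v k - p k ≤ v i - p i}ᶜ := by
      ext v; simp [hji]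
    rw [this]; exact (hM i).compl

/-- The selection for the item-pricing menu with prices `p`. -/
noncomputable def sel (p : Fin m → ℝ) (hp : ∀ j, 0 ≤ p j) (hm : 0 < m)
    (v : Fin m → ℝ) : Option (Lottery m) :=
  if 0 ≤ v (bestIdx p hm v) - p (bestIdx p hm v) then
    some (itemLottery m (bestIdx p hm v) (p (bestIdx p hm v)) (hp _))
  else none

lemma selP_sel (p : Fin m → ℝ) (hp : ∀ j, 0 ≤ p j) (hm : 0 < m) (v : Fin m → ℝ) :
    selP (sel p hp hm v)
      = if 0 ≤ v (bestIdx p hm v) - p (bestIdx p hm v) then p (bestIdx p hm v) else 0 := by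
  rw [sel]
  by_cases h : 0 ≤ v (bestIdx p hm v) - p (bestIdx p hm v) <;> simp [h, selP, itemLottery]

lemma selQ_sel (p : Fin m → ℝ) (hp : ∀ j, 0 ≤ p j) (hm : 0 < m) (v : Fin m → ℝ) (j' : Fin m) :
    selQ (sel p hp hm v) j'
      = if 0 ≤ v (bestIdx p hm v) - p (bestIdx p hm v) then
          (if j' = bestIdx p hm v then 1 else 0) else 0 := by
  rw [sel]
  by_cases h : 0 ≤ v (bestIdx p hm v) - p (bestIdx p hm v) <;> simp [h, selQ, itemLottery]

lemma meas_selHelper (p : Fin m → ℝ) (hp : ∀ j, 0 ≤ p j) (hm : 0 < m) (g : Fin m → ℝ) :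
    Measurable (fun v =>
      if 0 ≤ v (bestIdx p hm v) - p (bestIdx p hm v) then g (bestIdx p hm v) else 0) := by
  classical
  have heq : (fun v : Fin m → ℝ =>
      if 0 ≤ v (bestIdx p hm v) - p (bestIdx p hm v) then g (bestIdx p hm v) else 0)
      = fun v => ∑ j, Set.indicator
          ({v : Fin m → ℝ | bestIdx p hm v = j} ∩ {v : Fin m → ℝ | 0 ≤ v j - p j})
          (fun _ => g j) v := by
    funext v
    rw [Finset.sum_eq_single (bestIdx p hm v)]
    · by_cases h : 0 ≤ v (bestIdx p hm v) - p (bestIdx p hm v)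
      · rw [if_pos h]
        refine (Set.indicator_of_mem ?_ (fun _ => g (bestIdx p hm v))).symm
        exact Set.mem_inter rfl h
      · rw [if_neg h]
        exact (Set.indicator_of_notMem (fun hc => h hc.2) _).symm
    · intro j _ hj
      exact Set.indicator_of_notMem (fun hc => hj hc.1.symm) _
    · intro h; exact absurd (Finset.mem_univ _) h
  rw [heq]
  refine Finset.measurable_sum _ fun j _ => ?_
  refine Measurable.indicator measurable_const ?_
  exact (measurable_bestIdx_eq p hm j).inter
    (measurableSet_le measurable_const ((measurable_pi_apply j).sub measurable_const))

lemma isSelection_sel (p : Fin m → ℝ) (hp : ∀ j, 0 ≤ p j) (hm : 0 < m) :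
    IsSelection (Set.range (fun j => itemLottery m j (p j) (hp j))) (sel p hp hm) where
  measQ := by
    intro j'
    have : (fun v => selQ (sel p hp hm v) j')
        = fun v => if 0 ≤ v (bestIdx p hm v) - p (bestIdx p hm v) then
            ((fun j => if j' = j then (1:ℝ) else 0) (bestIdx p hm v)) else 0 := by
      funext v; exact selQ_sel p hp hm v j'
    rw [this]
    exact meas_selHelper p hp hm (fun j => if j' = j then (1:ℝ) else 0)
  measP := by
    have : (fun v => selP (sel p hp hm v))
        = fun v => if 0 ≤ v (bestIdx p hm v) - p (bestIdx p hm v) then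
            p (bestIdx p hm v) else 0 := by
      funext v; exact selP_sel p hp hm v
    rw [this]
    exact meas_selHelper p hp hm p
  buy_opt := by
    intro v _ ℓ hℓ
    rw [sel] at hℓ
    by_cases h : 0 ≤ v (bestIdx p hm v) - p (bestIdx p hm v)
    · rw [if_pos h] at hℓ
      have hℓ' : ℓ = itemLottery m (bestIdx p hm v) (p (bestIdx p hm v)) (hp _) :=
        (Option.some_injective _ hℓ).symm
      subst hℓ'
      refine ⟨⟨bestIdx p hm v, rfl⟩, ?_, ?_⟩
      · rw [itemLottery_util]; exact h
      · rintro ℓ' ⟨i, rfl⟩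
        rw [itemLottery_util, itemLottery_util]
        exact bestIdx_opt p hm v i
    · rw [if_neg h] at hℓ; exact absurd hℓ (by simp)
  no_buy := by
    intro v _ hnone ℓ' hℓ'
    rw [sel] at hnone
    by_cases h : 0 ≤ v (bestIdx p hm v) - p (bestIdx p hm v)
    · rw [if_pos h] at hnone; exact absurd hnone (by simp)
    · obtain ⟨i, rfl⟩ := hℓ'
      rw [itemLottery_util]
      have := bestIdx_opt p hm v i
      linarith

section Rev

variable {m : ℕ} (F : Fin m → Measure ℝ) [∀ j, IsProbabilityMeasure (F j)]

/-- The event that some item is acceptable (value at least price). -/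
def SaleSet (p : Fin m → ℝ) : Set (Fin m → ℝ) := ⋃ j, {v | p j ≤ v j}

/-- The event that item `j` is acceptable and no other one is. -/
def ESet (p : Fin m → ℝ) (j : Fin m) : Set (Fin m → ℝ) :=
  Set.univ.pi (fun i => if i = j then Set.Ici (p j) else Set.Iio (p i))

lemma measurable_SaleSet (p : Fin m → ℝ) : MeasurableSet (SaleSet p) :=
  MeasurableSet.iUnion fun j =>
    measurableSet_le measurable_const (measurable_pi_apply j)

lemma measurable_ESet (p : Fin m → ℝ) (j : Fin m) : MeasurableSet (ESet p j) := by
  refine MeasurableSet.univ_pi fun i => ?_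
  by_cases h : i = j <;> simp [h, measurableSet_Ici, measurableSet_Iio]

lemma ESet_self (p : Fin m → ℝ) {j : Fin m} {v : Fin m → ℝ} (hv : v ∈ ESet p j) :
    p j ≤ v j := by
  have := hv j (Set.mem_univ j); simpa using this

lemma ESet_other (p : Fin m → ℝ) {j : Fin m} {v : Fin m → ℝ} (hv : v ∈ ESet p j)
    {i : Fin m} (hi : i ≠ j) : v i < p i := by
  have := hv i (Set.mem_univ i); simpa [hi] using this

lemma ESet_subset_Sale (p : Fin m → ℝ) (j : Fin m) : ESet p j ⊆ SaleSet p := by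
  intro v hv
  exact Set.mem_iUnion.mpr ⟨j, ESet_self p hv⟩

lemma ESet_mem_notmem (p : Fin m → ℝ) {j j' : Fin m} (hne : j' ≠ j) {v : Fin m → ℝ}
    (hv : v ∈ ESet p j) : v ∉ ESet p j' := by
  intro hv'
  have h1 := ESet_other p hv hne
  have h2 := ESet_self p hv'
  exact absurd (lt_of_le_of_lt h2 h1) (lt_irrefl _)

lemma sel_chooses (p : Fin m → ℝ) (hp : ∀ j, 0 ≤ p j) (hm : 0 < m) (j : Fin m)
    {v : Fin m → ℝ} (hv : v ∈ ESet p j) : bestIdx p hm v = j := by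
  have hj : p j ≤ v j := ESet_self p hv
  have hother : ∀ i, i ≠ j → v i < p i := fun i hi => ESet_other p hv hi
  rw [bestIdx_eq_iff]
  constructor
  · intro k
    by_cases hk : k = j
    · subst hk; exact le_refl _
    · have := hother k hk
      have h2 : 0 ≤ v j - p j := by linarith
      linarith
  · intro i hi
    by_cases hij : i = j
    · subst hij; exact le_refl _
    · exfalso
      have h1 := hother i hij
      have h2 := hi j
      linarith

lemma phi_le_selP (p : Fin m → ℝ) (hp : ∀ j, 0 ≤ p j) (hm : 0 < m)
    {t : ℝ} (ht : 0 ≤ t) (htp : ∀ j, t ≤ p j) (v : Fin m → ℝ) :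
    t * Set.indicator (SaleSet p) (fun _ => (1:ℝ)) v
      + ∑ j, Set.indicator (ESet p j) (fun _ => p j - t) v
      ≤ selP (sel p hp hm v) := by
  classical
  by_cases hSale : v ∈ SaleSet p
  · -- the buyer buys something at price ≥ t
    obtain ⟨i0, hi0⟩ := Set.mem_iUnion.mp hSale
    have hbuy : 0 ≤ v (bestIdx p hm v) - p (bestIdx p hm v) := by
      have h1 := bestIdx_opt p hm v i0
      have h2 : (0:ℝ) ≤ v i0 - p i0 := by
        simp only [Set.mem_setOf_eq] at hi0; linarith
      linarith
    rw [selP_sel, if_pos hbuy]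
    rw [Set.indicator_of_mem hSale, mul_one]
    by_cases hE : ∃ j, v ∈ ESet p j
    · obtain ⟨j0, hj0⟩ := hE
      have hb : bestIdx p hm v = j0 := sel_chooses p hp hm j0 hj0
      have hsum : (∑ j, Set.indicator (ESet p j) (fun _ => p j - t) v)
          = Set.indicator (ESet p j0) (fun _ => p j0 - t) v := by
        apply Finset.sum_eq_single j0
        · intro j _ hjj
          exact Set.indicator_of_notMem (ESet_mem_notmem p hjj hj0) _
        · intro h
          exact absurd (Finset.mem_univ _) h
      rw [hsum, Set.indicator_of_mem hj0, hb]
      linarith [le_refl (p j0)]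
    · push_neg at hE
      have : ∀ j ∈ Finset.univ, Set.indicator (ESet p j) (fun _ => p j - t) v = 0 :=
        fun j _ => Set.indicator_of_notMem (hE j) _
      rw [Finset.sum_congr rfl this]
      simp only [Finset.sum_const_zero, add_zero]
      exact htp _
  · -- no sale
    rw [Set.indicator_of_notMem hSale, mul_zero]
    have : ∀ j ∈ Finset.univ, Set.indicator (ESet p j) (fun _ => p j - t) v = 0 :=
      fun j _ => Set.indicator_of_notMem (fun hc => hSale (ESet_subset_Sale p j hc)) _
    rw [Finset.sum_congr rfl this]
    simp only [Finset.sum_const_zero, zero_add]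
    rw [selP_sel]
    by_cases h : 0 ≤ v (bestIdx p hm v) - p (bestIdx p hm v)
    · rw [if_pos h]; exact hp _
    · rw [if_neg h]

lemma measure_ESet (p : Fin m → ℝ) (j : Fin m) :
    ((Measure.pi F) (ESet p j)).toReal
      = ((F j) (Set.Ici (p j))).toReal
        * ∏ i ∈ Finset.univ.erase j, ((F i) (Set.Iio (p i))).toReal := by
  classical
  rw [ESet, Measure.pi_pi, ENNReal.toReal_prod]
  rw [← Finset.mul_prod_erase Finset.univ _ (Finset.mem_univ j)]
  congr 1
  · rw [if_pos rfl]
  · refine Finset.prod_congr rfl fun i hi => ?_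
    rw [if_neg (Finset.ne_of_mem_erase hi)]

lemma measure_SaleSet (p : Fin m → ℝ) :
    ((Measure.pi F) (SaleSet p)).toReal
      = 1 - ∏ i, ((F i) (Set.Iio (p i))).toReal := by
  classical
  have hcompl : (SaleSet p)ᶜ = Set.univ.pi (fun i => Set.Iio (p i)) := by
    ext v
    simp [SaleSet, Set.mem_iUnion, not_le]
  have h1 : (Measure.pi F) (SaleSet p) + (Measure.pi F) (SaleSet p)ᶜ = 1 := by
    rw [measure_add_measure_compl (measurable_SaleSet p), measure_univ]
  have h2 : ((Measure.pi F) (SaleSet p)).toReal + ((Measure.pi F) (SaleSet p)ᶜ).toReal = 1 := by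
    rw [← ENNReal.toReal_add (measure_ne_top _ _) (measure_ne_top _ _), h1, ENNReal.toReal_one]
  have h3 : ((Measure.pi F) (SaleSet p)ᶜ).toReal = ∏ i, ((F i) (Set.Iio (p i))).toReal := by
    rw [hcompl, Measure.pi_pi, ENNReal.toReal_prod]
  linarith

lemma sel_revenue_bound (p : Fin m → ℝ) (hp : ∀ j, 0 ≤ p j) (hm : 0 < m)
    {t : ℝ} (ht : 0 ≤ t) (htp : ∀ j, t ≤ p j) :
    t * (1 - ∏ i, ((F i) (Set.Iio (p i))).toReal)
      + ∑ j, (p j - t) * (((F j) (Set.Ici (p j))).toReal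
          * ∏ i ∈ Finset.univ.erase j, ((F i) (Set.Iio (p i))).toReal)
      ≤ lotteryRevenue (Measure.pi F) (sel p hp hm) := by
  classical
  set μ := Measure.pi F with hμ
  have hselPmeas := (isSelection_sel p hp hm).measP
  have hint1 : Integrable (fun v => selP (sel p hp hm v)) μ := by
    refine Integrable.mono' (integrable_const (∑ j, p j)) hselPmeas.aestronglyMeasurable ?_
    refine Filter.Eventually.of_forall fun v => ?_
    rw [selP_sel, Real.norm_eq_abs]
    by_cases h : 0 ≤ v (bestIdx p hm v) - p (bestIdx p hm v)
    · rw [if_pos h, abs_of_nonneg (hp _)]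
      exact Finset.single_le_sum (fun i _ => hp i) (Finset.mem_univ _)
    · rw [if_neg h, abs_zero]
      exact Finset.sum_nonneg fun i _ => hp i
  have hint2 : Integrable (fun v =>
      t * Set.indicator (SaleSet p) (fun _ => (1:ℝ)) v
        + ∑ j, Set.indicator (ESet p j) (fun _ => p j - t) v) μ := by
    refine Integrable.add (Integrable.const_mul ?_ t) ?_
    · exact (integrable_const _).indicator (measurable_SaleSet p)
    · exact integrable_finset_sum _ fun j _ =>
        (integrable_const _).indicator (measurable_ESet p j)
  have hmono := integral_mono hint2 hint1
    (fun v => phi_le_selP p hp hm ht htp v)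
  rw [lotteryRevenue]
  refine le_trans (le_of_eq ?_) hmono
  rw [integral_add (Integrable.const_mul ((integrable_const _).indicator
        (measurable_SaleSet p)) t)
      (integrable_finset_sum _ fun j _ =>
        (integrable_const _).indicator (measurable_ESet p j)),
    integral_finset_sum _ fun j _ => (integrable_const _).indicator (measurable_ESet p j)]
  rw [integral_const_mul, integral_indicator_const _ (measurable_SaleSet p)]
  have hterm : ∀ j : Fin m, ∫ v, Set.indicator (ESet p j) (fun _ => p j - t) v ∂μ
      = (p j - t) * (((F j) (Set.Ici (p j))).toReal
          * ∏ i ∈ Finset.univ.erase j, ((F i) (Set.Iio (p i))).toReal) := by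
    intro j
    rw [integral_indicator_const _ (measurable_ESet p j), smul_eq_mul, ← measure_ESet F p j]
    simp only [Measure.real, hμ]
    ring
  rw [Finset.sum_congr rfl fun j _ => hterm j]
  rw [smul_eq_mul, mul_one, ← measure_SaleSet F p]
  rfl

end Rev

end Pricing

section Bdd

variable {m : ℕ} (F : Fin m → Measure ℝ) [∀ j, IsProbabilityMeasure (F j)]

lemma integrable_coord (hF_mean : ∀ j, Integrable id (F j)) (j : Fin m) :
    Integrable (fun v : Fin m → ℝ => v j) (Measure.pi F) := by
  classical
  refine ⟨(measurable_pi_apply j).aestronglyMeasurable, ?_⟩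
  rw [HasFiniteIntegral]
  have key : (∫⁻ v : Fin m → ℝ, (‖v j‖₊ : ℝ≥0∞) ∂(Measure.pi F))
      = ∫⁻ _ : Fin m → ℝ, (∫⁻ w, (‖w‖₊ : ℝ≥0∞) ∂(F j)) ∂(Measure.pi F) := by
    refine lintegral_eq_of_lmarginal_eq {j} ?_ measurable_const ?_
    · exact (measurable_pi_apply j).nnnorm.coe_nnreal_ennreal
    · funext v
      rw [lmarginal_singleton, lmarginal_singleton]
      have : ∀ w : ℝ, (‖(Function.update v j w) j‖₊ : ℝ≥0∞) = (‖w‖₊ : ℝ≥0∞) := by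
        intro w; rw [Function.update_self]
      simp_rw [this]
      rw [lintegral_const, measure_univ, mul_one]
  change (∫⁻ v : Fin m → ℝ, (‖v j‖₊ : ℝ≥0∞) ∂(Measure.pi F)) < ⊤
  rw [key, lintegral_const, measure_univ, mul_one]
  exact (hF_mean j).2

lemma ae_orth (hF_nonneg : ∀ j, F j (Set.Iio 0) = 0) :
    ∀ᵐ v ∂(Measure.pi F), ∀ i, 0 ≤ v i := by
  filter_upwards [measure_eq_zero_iff_ae_notMem.mp (orth_compl_null F hF_nonneg)] with v hv
  exact Set.not_notMem.mp hv

lemma lotteryRevenue_le (hF_nonneg : ∀ j, F j (Set.Iio 0) = 0)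
    (hF_mean : ∀ j, Integrable id (F j)) {L : Set (Lottery m)}
    {s : (Fin m → ℝ) → Option (Lottery m)} (hs : IsSelection L s) :
    lotteryRevenue (Measure.pi F) s ≤ ∫ v, ∑ j, v j ∂(Measure.pi F) := by
  have hintg : Integrable (fun v : Fin m → ℝ => ∑ j, v j) (Measure.pi F) :=
    integrable_finset_sum _ fun j _ => integrable_coord F hF_mean j
  have hbound : ∀ᵐ v ∂(Measure.pi F), ‖selP (s v)‖ ≤ ∑ j, v j := by
    filter_upwards [ae_orth F hF_nonneg] with v hv
    rcases hsv : s v with _ | ℓ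
    · simp only [selP, Real.norm_eq_abs, abs_zero]
      exact Finset.sum_nonneg fun j _ => hv j
    · obtain ⟨-, hutil, -⟩ := hs.buy_opt v hv ℓ hsv
      simp only [selP, Real.norm_eq_abs, abs_of_nonneg ℓ.p_nonneg]
      rw [Lottery.util] at hutil
      have hq : ∀ j, ℓ.q j * v j ≤ v j := by
        intro j
        have hq1 : ℓ.q j ≤ 1 := by
          refine le_trans ?_ ℓ.q_sum_le_one
          exact Finset.single_le_sum (fun i _ => ℓ.q_nonneg i) (Finset.mem_univ j)
        nlinarith [hv j, ℓ.q_nonneg j]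
      have : (∑ j, ℓ.q j * v j) ≤ ∑ j, v j := Finset.sum_le_sum fun j _ => hq j
      linarith
  have hint : Integrable (fun v => selP (s v)) (Measure.pi F) :=
    Integrable.mono' hintg hs.measP.aestronglyMeasurable hbound
  refine integral_mono_ae hint hintg ?_
  filter_upwards [hbound] with v hv
  exact le_trans (le_abs_self _) hv

lemma bddAbove_revSet (hF_nonneg : ∀ j, F j (Set.Iio 0) = 0)
    (hF_mean : ∀ j, Integrable id (F j)) :
    BddAbove {r : ℝ | ∃ (L : Set (Lottery m)) (s : (Fin m → ℝ) → Option (Lottery m)),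
      L.Nonempty ∧ IsItemPricing L ∧ IsSelection L s ∧
        r = lotteryRevenue (Measure.pi F) s} := by
  refine ⟨∫ v, ∑ j, v j ∂(Measure.pi F), ?_⟩
  rintro r ⟨L, s, -, -, hsel, rfl⟩
  exact lotteryRevenue_le F hF_nonneg hF_mean hsel

end Bdd

end CHK5

open CHK5 in
/-- For a single unit-demand buyer with independent item
values `v j ∼ F j` (Borel distributions on `ℝ≥0` with finite mean), the optimal
item-pricing revenue is at least half the expected revenue of every IC, IR
deterministic single-item auction for `m` independent bidders with values
`v j ∼ F j`. -/
theorem optItemPricing_ge_half_auction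
    {m : ℕ} (F : Fin m → Measure ℝ) [∀ j, IsProbabilityMeasure (F j)]
    (hF_nonneg : ∀ j, F j (Set.Iio 0) = 0)
    (hF_mean : ∀ j, Integrable id (F j))
    (x : (Fin m → ℝ) → Option (Fin m)) (pay : (Fin m → ℝ) → Fin m → ℝ)
    (hauction : IsAuction x pay) :
    (1 / 2) * auctionRevenue (Measure.pi F) pay ≤ optItemPricingRev (Measure.pi F) := by
  classical
  rcases Nat.eq_zero_or_pos m with hm0 | hm
  · -- no items: both sides are zero
    subst hm0
    have h1 : auctionRevenue (Measure.pi F) pay = 0 := by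
      rw [auctionRevenue]
      simp
    have h2 : {r : ℝ | ∃ (L : Set (Lottery 0)) (s : (Fin 0 → ℝ) → Option (Lottery 0)),
        L.Nonempty ∧ IsItemPricing L ∧ IsSelection L s ∧
          r = lotteryRevenue (Measure.pi F) s} = ∅ := by
      ext r
      simp only [Set.mem_setOf_eq, Set.mem_empty_iff_false, iff_false]
      rintro ⟨L, s, ⟨ℓ, hℓ⟩, hip, -, -⟩
      obtain ⟨j, -⟩ := hip ℓ hℓ
      exact Fin.elim0 j
    rw [h1, optItemPricingRev, h2, Real.sSup_empty]
    norm_num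
  · set μ := Measure.pi F with hμdef
    set R := auctionRevenue μ pay with hRdef
    have hR0 : 0 ≤ R :=
      integral_nonneg fun v => Finset.sum_nonneg fun j _ => hauction.pay_nonneg v j
    set t := R / 2 with htdef
    have ht : 0 ≤ t := by positivity
    have hbound : R ≤ t + ∑ j, sj (F j) t :=
      auction_bound F x pay hauction hF_nonneg hF_mean ht
    have hssum : t ≤ ∑ j, sj (F j) t := by
      have : R = t + t := by rw [htdef]; ring
      linarith
    have hgoal : (1 / 2) * R = t := by rw [htdef]; ring
    rw [hgoal, optItemPricingRev]
    refine le_of_forall_sub_le fun ε hε => ?_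
    -- choose near-optimal prices for each item
    have hex : ∀ j : Fin m, ∃ pp, t ≤ pp ∧
        sj (F j) t - ε / m < (pp - t) * ((F j) (Set.Ici pp)).toReal := by
      intro j
      have hlt : sj (F j) t - ε / m < sj (F j) t := by
        have hm' : (0:ℝ) < m := Nat.cast_pos.mpr hm
        have : 0 < ε / m := div_pos hε hm'
        linarith
      rw [sj] at hlt
      have hne : ((fun pp => (pp - t) * ((F j) (Set.Ici pp)).toReal) '' Set.Ici t).Nonempty :=
        Set.Nonempty.image _ ⟨t, Set.self_mem_Ici⟩
      obtain ⟨y, hy, hy2⟩ := exists_lt_of_lt_csSup hne hlt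
      obtain ⟨pp, hpp, rfl⟩ := hy
      exact ⟨pp, hpp, hy2⟩
    choose p hp1 hp2 using hex
    have hp0 : ∀ j, 0 ≤ p j := fun j => le_trans ht (hp1 j)
    have hrev := sel_revenue_bound F p hp0 hm ht hp1
    -- numeric bookkeeping
    set β : Fin m → ℝ := fun i => ((F i) (Set.Iio (p i))).toReal with hβdef
    set B := ∏ i, β i with hBdef
    have hβ0 : ∀ i, 0 ≤ β i := fun i => ENNReal.toReal_nonneg
    have hβ1 : ∀ i, β i ≤ 1 := by
      intro i
      have h := prob_le_one (μ := F i) (s := Set.Iio (p i))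
      have := ENNReal.toReal_mono ENNReal.one_ne_top h
      simpa using this
    have hB0 : 0 ≤ B := Finset.prod_nonneg fun i _ => hβ0 i
    have hB1 : B ≤ 1 := Finset.prod_le_one (fun i _ => hβ0 i) (fun i _ => hβ1 i)
    have hProdge : ∀ j : Fin m, B ≤ ∏ i ∈ Finset.univ.erase j, β i := by
      intro j
      have hsplit : B = β j * ∏ i ∈ Finset.univ.erase j, β i :=
        (Finset.mul_prod_erase Finset.univ β (Finset.mem_univ j)).symm
      have hProd0 : 0 ≤ ∏ i ∈ Finset.univ.erase j, β i :=
        Finset.prod_nonneg fun i _ => hβ0 i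
      nlinarith [hβ1 j, hβ0 j]
    have hterm : ∀ j : Fin m, (sj (F j) t - ε / m) * B
        ≤ (p j - t) * (((F j) (Set.Ici (p j))).toReal * ∏ i ∈ Finset.univ.erase j, β i) := by
      intro j
      have h1 : (sj (F j) t - ε / m) * B ≤ ((p j - t) * ((F j) (Set.Ici (p j))).toReal) * B :=
        mul_le_mul_of_nonneg_right (le_of_lt (hp2 j)) hB0
      have h2 : ((p j - t) * ((F j) (Set.Ici (p j))).toReal) * B
          ≤ ((p j - t) * ((F j) (Set.Ici (p j))).toReal) * ∏ i ∈ Finset.univ.erase j, β i := by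
        refine mul_le_mul_of_nonneg_left (hProdge j) ?_
        have := hp1 j
        have h0 : (0:ℝ) ≤ ((F j) (Set.Ici (p j))).toReal := ENNReal.toReal_nonneg
        nlinarith
      calc (sj (F j) t - ε / m) * B ≤ _ := h1
        _ ≤ _ := h2
        _ = (p j - t) * (((F j) (Set.Ici (p j))).toReal * ∏ i ∈ Finset.univ.erase j, β i) := by
          ring
    have hsum2 : (∑ j, (sj (F j) t - ε / m)) * B
        ≤ ∑ j, (p j - t) * (((F j) (Set.Ici (p j))).toReal
            * ∏ i ∈ Finset.univ.erase j, β i) := by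
      rw [Finset.sum_mul]
      exact Finset.sum_le_sum fun j _ => hterm j
    have hsum3 : (∑ j, (sj (F j) t - ε / m)) = (∑ j, sj (F j) t) - ε := by
      rw [Finset.sum_sub_distrib]
      congr 1
      rw [Finset.sum_const, Finset.card_univ, Fintype.card_fin, nsmul_eq_mul]
      field_simp
    -- put it all together
    have hmain : t - ε ≤ t * (1 - B)
        + ∑ j, (p j - t) * (((F j) (Set.Ici (p j))).toReal
            * ∏ i ∈ Finset.univ.erase j, β i) := by
      have h4 : ((∑ j, sj (F j) t) - ε) * B ≤ ∑ j, (p j - t)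
          * (((F j) (Set.Ici (p j))).toReal * ∏ i ∈ Finset.univ.erase j, β i) := by
        rw [← hsum3]; exact hsum2
      nlinarith [hssum, hB0, hB1, hε.le]
    have hle : t - ε ≤ lotteryRevenue μ (sel p hp0 hm) := le_trans hmain hrev
    refine le_trans hle (le_csSup (bddAbove_revSet F hF_nonneg hF_mean) ?_)
    refine ⟨Set.range (fun j => itemLottery m j (p j) (hp0 j)), sel p hp0 hm, ?_, ?_, ?_, rfl⟩
    · exact ⟨itemLottery m ⟨0, hm⟩ (p ⟨0, hm⟩) (hp0 _), ⟨⟨0, hm⟩, rfl⟩⟩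
    · rintro ℓ ⟨j, rfl⟩
      exact ⟨j, rfl⟩
    · exact isSelection_sel p hp0 hm
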